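/- Let E be a 2-dimensional real inner product space with orthonormal basis (ω₁, ω₂), and let A be a self-adjoint operator on E with distinct eigenvalues μ₁ < μ₂ and unit eigenvector φ₁ for μ₁. If μ₁ is close to a and μ₂ is close to b with a < b, and ‖A − A₀‖ < ε where A₀ has eigenvalues a, b with eigenvector ω₁ for a, then ‖φ₁ − ω₁‖ or ‖φ₁ + ω₁‖ is at most Cε/(b − a − 2ε) for a universal constant C (eigenvector perturbation bound). -/

import Mathlib

open scoped RealInnerProductSpace

set_option maxHeartbeats 1000000

/-- Eigenvector perturbation (Davis–Kahan type) bound: there is a universal constant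
`C` such that on any 2-dimensional real inner product space with orthonormal basis
`(ω₁, ω₂)`, if `A₀` is self-adjoint with eigenvalues `a < b` and eigenvectors `ω₁, ω₂`,
and `A` is self-adjoint with eigenvalues `μ₁ < μ₂` close to `a, b` and unit eigenvector
`φ₁` for `μ₁`, and `‖A − A₀‖ < ε` with `2ε < b − a`, then `φ₁` is within
`Cε/(b − a − 2ε)` of `ω₁` or of `−ω₁`. -/
theorem eigenvector_perturbation_bound :
    ∃ C : ℝ, 0 < C ∧
      ∀ (E : Type) [NormedAddCommGroup E] [InnerProductSpace ℝ E],
        Module.finrank ℝ E = 2 →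
        ∀ (ω₁ ω₂ : E), ‖ω₁‖ = 1 → ‖ω₂‖ = 1 → ⟪ω₁, ω₂⟫ = 0 →
        ∀ (A A₀ : E →L[ℝ] E),
          (∀ x y : E, ⟪A x, y⟫ = ⟪x, A y⟫) →
          (∀ x y : E, ⟪A₀ x, y⟫ = ⟪x, A₀ y⟫) →
        ∀ (a b μ₁ μ₂ ε : ℝ) (φ₁ : E),
          a < b → 0 < ε → 2 * ε < b - a →
          A₀ ω₁ = a • ω₁ → A₀ ω₂ = b • ω₂ →
          μ₁ < μ₂ → Module.End.HasEigenvalue (A : E →ₗ[ℝ] E) μ₂ →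
          ‖φ₁‖ = 1 → A φ₁ = μ₁ • φ₁ →
          |μ₁ - a| ≤ ε → |μ₂ - b| ≤ ε →
          ‖A - A₀‖ < ε →
          (‖φ₁ - ω₁‖ ≤ C * ε / (b - a - 2 * ε) ∨
            ‖φ₁ + ω₁‖ ≤ C * ε / (b - a - 2 * ε)) := by
  refine ⟨2, by norm_num, ?_⟩
  intro E _ _ hdim ω₁ ω₂ hω₁ hω₂ hω12 A A₀ hA hA₀ a b μ₁ μ₂ ε φ₁ hab hε hgap hA₀1 hA₀2
    hμ hμ2ev hφ hAφ hμ1a hμ2b hAA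
  -- inner products among ω₁, ω₂
  have hω11 : ⟪ω₁, ω₁⟫ = 1 := by
    rw [real_inner_self_eq_norm_sq, hω₁]; norm_num
  have hω22 : ⟪ω₂, ω₂⟫ = 1 := by
    rw [real_inner_self_eq_norm_sq, hω₂]; norm_num
  have hω21 : ⟪ω₂, ω₁⟫ = 0 := by rw [real_inner_comm]; exact hω12
  -- orthonormal family
  have horth : Orthonormal ℝ ![ω₁, ω₂] := by
    rw [orthonormal_iff_ite]
    intro i j
    fin_cases i <;> fin_cases j <;>
      simp [hω11, hω22, hω12, hω21, hω₁, hω₂]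
  have hcard : Fintype.card (Fin 2) = Module.finrank ℝ E := by simp [hdim]
  have hspan : Submodule.span ℝ {ω₁, ω₂} = ⊤ := by
    have h := (basisOfLinearIndependentOfCardEqFinrank horth.linearIndependent hcard).span_eq
    rw [coe_basisOfLinearIndependentOfCardEqFinrank] at h
    have hrange : Set.range ![ω₁, ω₂] = {ω₁, ω₂} := by
      ext z; simp [Fin.exists_fin_two]; tauto
    rwa [hrange] at h
  -- write φ₁ = x • ω₁ + y • ω₂
  have hmem : φ₁ ∈ Submodule.span ℝ ({ω₁, ω₂} : Set E) := by
    rw [hspan]; trivial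
  obtain ⟨x, y, hxy⟩ := Submodule.mem_span_pair.mp hmem
  -- inner products
  have hinner1 : ⟪ω₁, φ₁⟫ = x := by
    rw [← hxy, inner_add_right, real_inner_smul_right, real_inner_smul_right, hω11, hω12]
    ring
  have hinner2 : ⟪ω₂, φ₁⟫ = y := by
    rw [← hxy, inner_add_right, real_inner_smul_right, real_inner_smul_right, hω21, hω22]
    ring
  have hnorm : x ^ 2 + y ^ 2 = 1 := by
    have h1 : ⟪φ₁, φ₁⟫ = 1 := by rw [real_inner_self_eq_norm_sq, hφ]; norm_num
    rw [← hxy] at h1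
    simp only [inner_add_left, inner_add_right, real_inner_smul_left, real_inner_smul_right,
      hω11, hω22, hω12, hω21] at h1
    nlinarith [h1]
  -- key estimate on y
  have hd : 0 < b - a - 2 * ε := by linarith
  have hkey : ⟪(A - A₀) φ₁, ω₂⟫ = (μ₁ - b) * y := by
    have h1 : ⟪A φ₁, ω₂⟫ = μ₁ * y := by
      rw [hAφ, real_inner_smul_left, real_inner_comm, hinner2]
    have h2 : ⟪A₀ φ₁, ω₂⟫ = b * y := by
      rw [hA₀ φ₁ ω₂, hA₀2, real_inner_smul_right, real_inner_comm, hinner2]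
    have : (A - A₀) φ₁ = A φ₁ - A₀ φ₁ := rfl
    rw [this, inner_sub_left, h1, h2]; ring
  have hbound : |(μ₁ - b) * y| ≤ ε := by
    rw [← hkey]
    calc |⟪(A - A₀) φ₁, ω₂⟫| ≤ ‖(A - A₀) φ₁‖ * ‖ω₂‖ := abs_real_inner_le_norm _ _
    _ ≤ ‖A - A₀‖ * ‖φ₁‖ * ‖ω₂‖ := by
        gcongr; exact (A - A₀).le_opNorm φ₁
    _ ≤ ε := by rw [hφ, hω₂]; simpa using hAA.le
  have hμ1b : b - a - ε ≤ |μ₁ - b| := by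
    obtain ⟨h1, h2⟩ := abs_le.mp hμ1a
    rw [abs_sub_comm, abs_of_nonneg (by linarith)]
    linarith
  have hy : |y| ≤ ε / (b - a - 2 * ε) := by
    rw [abs_mul] at hbound
    have h1 : |y| * (b - a - ε) ≤ ε := by
      calc |y| * (b - a - ε) ≤ |y| * |μ₁ - b| :=
            mul_le_mul_of_nonneg_left hμ1b (abs_nonneg y)
      _ = |μ₁ - b| * |y| := mul_comm _ _
      _ ≤ ε := hbound
    rw [le_div_iff₀ hd]
    nlinarith [abs_nonneg y]
  -- conclude
  have hy2 : y ^ 2 ≤ (ε / (b - a - 2 * ε)) ^ 2 := by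
    have h := abs_le.mp hy
    nlinarith [mul_nonneg (sub_nonneg.mpr h.2) (by linarith [h.1] :
      (0:ℝ) ≤ y + ε / (b - a - 2 * ε))]
  have hx1 : x ≤ 1 ∧ -1 ≤ x := by
    constructor <;> nlinarith [sq_nonneg y, sq_nonneg (x - 1), sq_nonneg (x + 1)]
  have h4 : (2 * ε / (b - a - 2 * ε)) ^ 2 = 4 * (ε / (b - a - 2 * ε)) ^ 2 := by ring
  have h5 : 0 ≤ (ε / (b - a - 2 * ε)) ^ 2 := sq_nonneg _
  have hrhs : 0 ≤ 2 * ε / (b - a - 2 * ε) := by positivity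
  rcases le_or_gt 0 x with hx | hx
  · left
    have hsq : ‖φ₁ - ω₁‖ ^ 2 ≤ (2 * ε / (b - a - 2 * ε)) ^ 2 := by
      have h1 : ‖φ₁ - ω₁‖ ^ 2 = 2 - 2 * x := by
        rw [norm_sub_sq_real, real_inner_comm, hinner1, hφ, hω₁]; ring
      have h2 : 2 - 2 * x ≤ 2 * y ^ 2 := by nlinarith [mul_nonneg hx (sub_nonneg.mpr hx1.1)]
      linarith [h1.le, h2]
    have := Real.sqrt_le_sqrt hsq
    rwa [Real.sqrt_sq (norm_nonneg _), Real.sqrt_sq hrhs] at this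
  · right
    have hsq : ‖φ₁ + ω₁‖ ^ 2 ≤ (2 * ε / (b - a - 2 * ε)) ^ 2 := by
      have h1 : ‖φ₁ + ω₁‖ ^ 2 = 2 + 2 * x := by
        rw [norm_add_sq_real, real_inner_comm, hinner1, hφ, hω₁]; ring
      have h2 : 2 + 2 * x ≤ 2 * y ^ 2 := by
        nlinarith [mul_nonneg (neg_nonneg.mpr hx.le) (by linarith [hx1.2] : (0:ℝ) ≤ x + 1)]
      linarith [h1.le, h2]
    have := Real.sqrt_le_sqrt hsq
    rwa [Real.sqrt_sq (norm_nonneg _), Real.sqrt_sq hrhs] at this
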